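/- Let φ : ℍ → ℍ be holomorphic. If limsup_{z→∞} Re z / Re φ(z) < ∞ (limit superior over z → ∞ in ℍ), then sup_{z∈ℍ} Re z / Re φ(z) < ∞, and the two quantities are equal. -/

import Mathlib

open Complex MeasureTheory Filter Topology Set

noncomputable section

/-- The open right half-plane. -/
def RHP : Set ℂ := {z : ℂ | 0 < z.re}

/-- The Szegő kernel of the right half-plane: `kern w z = k_w(z) = 1/(z + conj w)`. -/
def kern (w z : ℂ) : ℂ := 1 / (z + (starRingEnd ℂ) w)

/-- The mean of `|f|^2` on the vertical line `Re = x`. -/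
def hardyMean2 (f : ℂ → ℂ) (x : ℝ) : ℝ :=
  (1 / (2 * Real.pi)) * ∫ y : ℝ, ‖f (x + y * Complex.I)‖ ^ 2

/-- Membership in the Hardy space `H²(ℍ)` of the right half-plane. -/
def MemHardy2 (f : ℂ → ℂ) : Prop :=
  DifferentiableOn ℂ f RHP ∧ ∃ C : ℝ, ∀ x : ℝ, 0 < x → hardyMean2 f x ≤ C

/-- The squared `H²` norm, as the supremum of the vertical-line means. -/
def hardyNormSq (f : ℂ → ℂ) : ℝ :=
  sSup {m : ℝ | ∃ x : ℝ, 0 < x ∧ m = hardyMean2 f x}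

/-- `HardyInnerTendsto f g L` says the `H²(ℍ)` inner product `⟨f, g⟩` equals `L`,
realized as a limit of inner products over vertical lines `Re = x` as `x → 0⁺`. -/
def HardyInnerTendsto (f g : ℂ → ℂ) (L : ℂ) : Prop :=
  Tendsto (fun x : ℝ => ((1 / (2 * Real.pi) : ℝ) : ℂ) *
      ∫ y : ℝ, f (x + y * Complex.I) * (starRingEnd ℂ) (g (x + y * Complex.I)))
    (𝓝[>] (0 : ℝ)) (𝓝 L)

/-- The composition operator `C_φ : f ↦ f ∘ φ` is bounded on `H²(ℍ)` with bound `M`. -/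
def CompBoundedBy (φ : ℂ → ℂ) (M : ℝ) : Prop :=
  ∀ f : ℂ → ℂ, MemHardy2 f →
    MemHardy2 (f ∘ φ) ∧ hardyNormSq (f ∘ φ) ≤ M ^ 2 * hardyNormSq f

/-- The operator norm of the composition operator `C_φ` on `H²(ℍ)`. -/
def compNorm (φ : ℂ → ℂ) : ℝ :=
  sInf {M : ℝ | 0 ≤ M ∧ CompBoundedBy φ M}

/-- A kernel `K : X × X → ℂ` is positive if every finite Gram sum
`∑ᵢⱼ cᵢ conj(cⱼ) K(xᵢ,xⱼ)` is real and nonnegative. -/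
def IsPosKernel {X : Type*} (K : X → X → ℂ) : Prop :=
  ∀ (n : ℕ) (c : Fin n → ℂ) (x : Fin n → X),
    0 ≤ (∑ i, ∑ j, c i * (starRingEnd ℂ) (c j) * K (x i) (x j)).re ∧
    (∑ i, ∑ j, c i * (starRingEnd ℂ) (c j) * K (x i) (x j)).im = 0

/-- Phragmén–Lindelöf: if `Re g ≥ -a Re z` on RHP and `Re g ≥ 0` far away, then `Re g ≥ 0`. -/
lemma PLlemma (g : ℂ → ℂ) (hg : DifferentiableOn ℂ g RHP) (a : ℝ) (ha : 0 ≤ a)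
    (hlow : ∀ z ∈ RHP, -(a * z.re) ≤ (g z).re)
    (R₀ : ℝ) (hfar : ∀ z ∈ RHP, R₀ ≤ ‖z‖ → 0 ≤ (g z).re)
    (z₀ : ℂ) (hz₀ : z₀ ∈ RHP) : 0 ≤ (g z₀).re := by
  have hopen : IsOpen RHP := isOpen_lt continuous_const Complex.continuous_re
  have hx₀ : 0 < z₀.re := hz₀
  have key : ∀ ε : ℝ, 0 < ε → ε < z₀.re → -(a * ε) ≤ (g z₀).re := by
    intro ε hε hεlt
    set R : ℝ := max R₀ (‖z₀‖ + 1) with hR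
    set U : Set ℂ := {z : ℂ | ε < z.re ∧ ‖z‖ < R} with hU
    have hUsub : U ⊆ RHP := fun z hz => lt_trans hε hz.1
    have hCclosed : IsClosed ({z : ℂ | ε ≤ z.re} ∩ Metric.closedBall 0 R) :=
      (isClosed_le continuous_const Complex.continuous_re).inter Metric.isClosed_closedBall
    have hUC : U ⊆ {z : ℂ | ε ≤ z.re} ∩ Metric.closedBall 0 R := by
      intro z hz
      refine ⟨le_of_lt hz.1, ?_⟩
      simp only [Metric.mem_closedBall, Complex.dist_eq, sub_zero]
      exact le_of_lt hz.2
    have hclC : closure U ⊆ {z : ℂ | ε ≤ z.re} ∩ Metric.closedBall 0 R :=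
      closure_minimal hUC hCclosed
    have hclRHP : closure U ⊆ RHP := fun z hz => lt_of_lt_of_le hε (hclC hz).1
    have hbU : Bornology.IsBounded U := by
      refine (Metric.isBounded_closedBall (x := (0:ℂ)) (r := R)).subset ?_
      intro z hz; exact (hUC hz).2
    set f : ℂ → ℂ := fun z => Complex.exp (-(g z)) with hf
    have hfd : DifferentiableOn ℂ f RHP := (hg.neg).cexp
    have hdiff : DiffContOnCl ℂ f U := by
      refine ⟨hfd.mono hUsub, ?_⟩
      exact (hfd.mono hclRHP).continuousOn
    have hfront : ∀ z ∈ frontier U, ‖f z‖ ≤ Real.exp (a * ε) := by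
      intro z hzf
      have hzcl : z ∈ closure U := hzf.1
      have hzC := hclC hzcl
      have hzRHP : z ∈ RHP := hclRHP hzcl
      have hge : -(a*ε) ≤ (g z).re := by
        have hUopen : IsOpen U :=
          (isOpen_lt continuous_const Complex.continuous_re).inter
            (isOpen_lt (continuous_norm) continuous_const)
        have hznU : z ∉ U := by
          have := hzf.2
          rwa [hUopen.interior_eq] at this
        rcases (not_and_or.mp hznU) with h1 | h2
        · have hzε : z.re = ε := le_antisymm (not_lt.mp h1) hzC.1
          have hl := hlow z hzRHP
          rw [hzε] at hl
          exact hl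
        · -- |z| ≥ R ≥ R₀
          have hRz : R ≤ ‖z‖ := not_lt.mp h2
          have := hfar z hzRHP (le_trans (le_max_left _ _) hRz)
          nlinarith [mul_nonneg ha (le_of_lt hε)]
      have : ‖f z‖ = Real.exp (-(g z).re) := by
        rw [hf]; simp only
        rw [Complex.norm_exp]
        simp
      rw [this]
      exact Real.exp_le_exp.mpr (by linarith)
    have hz₀U : z₀ ∈ U := by
      constructor
      · exact hεlt
      · exact lt_of_lt_of_le (by linarith) (le_max_right R₀ (‖z₀‖ + 1))
    have := Complex.norm_le_of_forall_mem_frontier_norm_le hbU hdiff hfront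
      (subset_closure hz₀U)
    have hnorm : ‖f z₀‖ = Real.exp (-(g z₀).re) := by
      rw [hf]; simp only
      rw [Complex.norm_exp]; simp
    rw [hnorm] at this
    have := Real.exp_le_exp.mp this
    linarith
  by_contra hc
  push_neg at hc
  set c := (g z₀).re
  set ε := min (z₀.re/2) ((-c)/(2*(a+1)))
  have hε : 0 < ε := lt_min (by linarith) (div_pos (by linarith) (by linarith))
  have hεlt : ε < z₀.re := lt_of_le_of_lt (min_le_left _ _) (by linarith)
  have h := key ε hε hεlt
  have h2 : ε ≤ (-c)/(2*(a+1)) := min_le_right _ _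
  have : a * ε ≤ (a+1) * ((-c)/(2*(a+1))) := by
    apply mul_le_mul (by linarith) h2 (le_of_lt hε) (by linarith)
  have h3 : (a+1) * ((-c)/(2*(a+1))) = (-c)/2 := by
    field_simp
  nlinarith


theorem sup_eq_limsup (φ : ℂ → ℂ) (hmaps : MapsTo φ RHP RHP)
    (hol : DifferentiableOn ℂ φ RHP)
    (hbdd : IsBoundedUnder (· ≤ ·) (Filter.comap (fun z : ℂ => ‖z‖) Filter.atTop ⊓ Filter.principal RHP)
      (fun z : ℂ => z.re / (φ z).re)) :
    BddAbove {r : ℝ | ∃ z ∈ RHP, r = z.re / (φ z).re} ∧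
      sSup {r : ℝ | ∃ z ∈ RHP, r = z.re / (φ z).re} =
        Filter.limsup (fun z : ℂ => z.re / (φ z).re)
          (Filter.comap (fun z : ℂ => ‖z‖) Filter.atTop ⊓ Filter.principal RHP) := by
  set F := Filter.comap (fun z : ℂ => ‖z‖) Filter.atTop ⊓ Filter.principal RHP with hF
  set h : ℂ → ℝ := fun z => z.re / (φ z).re with hh
  set S := {r : ℝ | ∃ z ∈ RHP, r = z.re / (φ z).re} with hS
  set L := Filter.limsup h F with hL
  have hpos : ∀ z ∈ RHP, 0 < (φ z).re := fun z hz => hmaps hz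
  have hne : F.NeBot := by
    have ht : Tendsto (fun x : ℝ => (x : ℂ)) atTop F := by
      rw [hF]
      refine tendsto_inf.mpr ⟨?_, ?_⟩
      · rw [tendsto_comap_iff]
        have heq : ((fun z : ℂ => ‖z‖) ∘ fun x : ℝ => (x : ℂ)) = fun x => |x| := by
          funext x; simp
        rw [heq]
        exact tendsto_abs_atTop_atTop
      · rw [tendsto_principal]
        filter_upwards [eventually_gt_atTop (0:ℝ)] with x hx
        simpa [RHP] using hx
    exact (atTop_neBot.map _).mono ht
  have key : ∀ z₀ ∈ RHP, h z₀ ≤ L := by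
    intro z₀ hz₀
    by_contra hcon
    push_neg at hcon
    have hz₀pos : 0 < h z₀ := div_pos hz₀ (hpos z₀ hz₀)
    set lam : ℝ := max ((L + h z₀)/2) (h z₀ / 2) with hlam
    have hlam0 : 0 < lam := lt_of_lt_of_le (by linarith) (le_max_right _ _)
    have hlamL : L < lam := lt_of_lt_of_le (by linarith) (le_max_left _ _)
    have hlamlt : lam < h z₀ := max_lt (by linarith) (by linarith)
    have hev : ∀ᶠ z in F, h z < lam := eventually_lt_of_limsup_lt hlamL hbdd
    rw [hF, eventually_inf_principal] at hev
    rw [eventually_comap] at hev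
    rw [eventually_atTop] at hev
    obtain ⟨R, hR⟩ := hev
    have hPL := PLlemma (fun z => φ z - ((1/lam : ℝ) : ℂ) * z)
      (hol.sub ((differentiable_id.const_mul _).differentiableOn)) (1/lam)
      (by positivity)
      (by
        intro z hz
        have := hpos z hz
        simp only [Complex.sub_re, Complex.mul_re, Complex.ofReal_re, Complex.ofReal_im]
        ring_nf
        nlinarith)
      (max R 1)
      (by
        intro z hz hRz
        have hp := hpos z hz
        have hhz : h z < lam := hR ‖z‖ (le_trans (le_max_left _ _) hRz) z rfl hz
        have hzre : z.re < lam * (φ z).re := by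
          rw [hh] at hhz
          exact (div_lt_iff₀ hp).mp hhz
        simp only [Complex.sub_re, Complex.mul_re, Complex.ofReal_re, Complex.ofReal_im]
        have hq : (1/lam) * z.re < (φ z).re := by
          rw [div_mul_eq_mul_div, one_mul, div_lt_iff₀ hlam0]
          linarith [mul_comm lam ((φ z).re)]
        simp only [zero_mul, sub_zero]
        linarith)
      z₀ hz₀
    simp only [Complex.sub_re, Complex.mul_re, Complex.ofReal_re, Complex.ofReal_im,
      zero_mul, sub_zero] at hPL
    have h1 : z₀.re / lam ≤ (φ z₀).re := by
      rw [div_mul_eq_mul_div, one_mul] at hPL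
      linarith
    have h2 : z₀.re ≤ (φ z₀).re * lam := (div_le_iff₀ hlam0).mp h1
    have : h z₀ ≤ lam := by
      rw [hh]
      exact (div_le_iff₀ (hpos z₀ hz₀)).mpr (by linarith [mul_comm lam ((φ z₀).re)])
    linarith
  have hbddS : BddAbove S := ⟨L, by rintro r ⟨z, hz, rfl⟩; exact key z hz⟩
  have h1mem : (1 : ℂ) ∈ RHP := by simp [RHP]
  have hSne : S.Nonempty := ⟨(1:ℂ).re / (φ 1).re, 1, h1mem, rfl⟩
  refine ⟨hbddS, le_antisymm (csSup_le hSne ?_) ?_⟩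
  · rintro r ⟨z, hz, rfl⟩; exact key z hz
  · have hevRHP : ∀ᶠ z in F, z ∈ RHP := by
      rw [hF, eventually_inf_principal]
      exact Eventually.of_forall fun z hz => hz
    have hev0 : ∀ᶠ z in F, (0:ℝ) ≤ h z := by
      filter_upwards [hevRHP] with z hz
      exact le_of_lt (div_pos hz (hpos z hz))
    have hb : IsBoundedUnder (· ≥ ·) F h := ⟨0, eventually_map.mpr hev0⟩
    haveI := hne
    have hcob : IsCoboundedUnder (· ≤ ·) F h := hb.isCoboundedUnder_flip
    refine limsup_le_of_le hcob ?_
    filter_upwards [hevRHP] with z hz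
    exact le_csSup hbddS ⟨z, hz, rfl⟩
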